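/- arXiv:2007.01354 — 6 statements merged into one kernel-verified Lean document; each statement's English description precedes it below -/
import Mathlib

section
/- For all integers m ≥ 10 and 2 ≤ k ≤ (m-1)/2, one has C(m-4,k) + 2·C(m-4,k-2) > C(m,k)^{1/2}. -/
/-- `2 * C(n,2) = n * (n-1)`. -/
lemma two_mul_choose_two (n : ℕ) : 2 * n.choose 2 = n * (n - 1) := by
  rw [Nat.choose_two_right]
  have h : 2 ∣ n * (n - 1) := by
    rcases Nat.even_or_odd n with he | ho
    · exact Dvd.dvd.mul_right he.two_dvd _
    · cases n with
      | zero => simp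
      | succ n =>
        have hn : Even (n + 1 - 1) := by
          simpa using (Nat.Odd.sub_odd ho odd_one)
        exact Dvd.dvd.mul_left hn.two_dvd _
  exact Nat.mul_div_cancel' h

/-- monotonicity of `choose` in the second argument up to the middle. -/
lemma choose_mono_half (n : ℕ) : ∀ {a b : ℕ}, a ≤ b → b ≤ n / 2 →
    n.choose a ≤ n.choose b := by
  intro a b hab hb
  induction b with
  | zero => simp [Nat.le_zero.mp hab]
  | succ b ih =>
    rcases Nat.lt_or_ge a (b+1) with h | h
    · exact le_trans (ih (by omega) (by omega))
        (Nat.choose_le_succ_of_lt_half_left (by omega))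
    · have : a = b + 1 := by omega
      subst this; rfl

/-- cubic numeric inequality. -/
lemma numeric_cubic (t : ℕ) (h : 5 ≤ t) :
    (t+5) * (t+3) * (t+2) < 2 * ((t+1) * t * (t+6)) := by
  have h1 : 5 * t ≤ t * t := Nat.mul_le_mul_right t h
  have h2 : 5 * (t * t) ≤ t * (t * t) := Nat.mul_le_mul_right _ h
  nlinarith [h1, h2, h]

/-- Numeric core inequality. -/
lemma numeric_core (K j : ℕ) (h : 5 ≤ 2 * K + j) :
    (2*K+5+j) * (2*K+4+j) * (2*K+3+j) * (2*K+2+j) <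
      4 * ((2*K+1+j) * (2*K+j)) * ((K+2)*(K+1)) * ((K+3+j)*(K+2+j)) := by
  set t := 2*K + j with ht
  have e5 : 2*K+5+j = t+5 := by omega
  have e4 : 2*K+4+j = t+4 := by omega
  have e3 : 2*K+3+j = t+3 := by omega
  have e2 : 2*K+2+j = t+2 := by omega
  have e1 : 2*K+1+j = t+1 := by omega
  rw [e5, e4, e3, e2, e1]
  have cubic := numeric_cubic t h
  have step1 : (t+5) * (t+4) * (t+3) * (t+2) < 2 * ((t+1) * t) * ((t+6) * (t+4)) := by
    calc (t+5) * (t+4) * (t+3) * (t+2)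
        = ((t+5) * (t+3) * (t+2)) * (t+4) := by ring
      _ < (2 * ((t+1) * t * (t+6))) * (t+4) :=
          Nat.mul_lt_mul_of_lt_of_le cubic le_rfl (by omega)
      _ = 2 * ((t+1) * t) * ((t+6) * (t+4)) := by ring
  have step2 : 2 * ((t+1) * t) * ((t+6) * (t+4))
      ≤ 2 * ((t+1) * t) * ((2*(K+3+j)) * (2*(K+2+j))) := by
    apply Nat.mul_le_mul_left
    apply Nat.mul_le_mul <;> omega
  have step3 : 2 * ((t+1) * t) * ((2*(K+3+j)) * (2*(K+2+j)))
      = 8 * ((t+1) * t) * ((K+3+j)*(K+2+j)) := by ring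
  have step4 : 8 * ((t+1) * t) * ((K+3+j)*(K+2+j))
      ≤ 4 * ((t+1) * t) * ((K+2)*(K+1)) * ((K+3+j)*(K+2+j)) := by
    have hB : 2 ≤ (K+2)*(K+1) := by nlinarith [Nat.zero_le (K*K)]
    calc 8 * ((t+1) * t) * ((K+3+j)*(K+2+j))
        = 4 * ((t+1) * t) * 2 * ((K+3+j)*(K+2+j)) := by ring
      _ ≤ 4 * ((t+1) * t) * ((K+2)*(K+1)) * ((K+3+j)*(K+2+j)) := by
          apply Nat.mul_le_mul_right
          exact Nat.mul_le_mul_left _ hB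
  calc (t+5) * (t+4) * (t+3) * (t+2)
      < 2 * ((t+1) * t) * ((t+6) * (t+4)) := step1
    _ ≤ 2 * ((t+1) * t) * ((2*(K+3+j)) * (2*(K+2+j))) := step2
    _ = 8 * ((t+1) * t) * ((K+3+j)*(K+2+j)) := step3
    _ ≤ 4 * ((t+1) * t) * ((K+2)*(K+1)) * ((K+3+j)*(K+2+j)) := step4

/-- Key natural-number inequality: `C(m,k) < 8 C(m-4,k) C(m-4,k-2)`. -/
lemma key_nat (m k : ℕ) (hm : 10 ≤ m) (hk : 2 ≤ k) (hkm : 2 * k ≤ m - 1) :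
    m.choose k < 8 * (m - 4).choose k * (m - 4).choose (k - 2) := by
  have hkm' : 2 * k + 1 ≤ m := by omega
  -- identity: C(m,k) * C(k,2) * C(m-k,2) = C(m,2) * C(m-2,2) * C(m-4,k-2)
  have h1 : m.choose k * k.choose 2 = m.choose 2 * (m-2).choose (k-2) :=
    Nat.choose_mul hk
  have h2 : (m-2).choose (m-k) = (m-2).choose (k-2) := by
    have := Nat.choose_symm (n := m-2) (k := k-2) (by omega)
    rwa [show m - 2 - (k-2) = m - k by omega] at this
  have h3 : (m-2).choose (m-k) * (m-k).choose 2
      = (m-2).choose 2 * (m-4).choose (m-k-2) := by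
    have := Nat.choose_mul (n := m-2) (k := m-k) (s := 2) (by omega)
    rwa [show m - 2 - 2 = m - 4 by omega] at this
  have h4 : (m-4).choose (m-k-2) = (m-4).choose (k-2) := by
    have := Nat.choose_symm (n := m-4) (k := k-2) (by omega)
    rwa [show m - 4 - (k-2) = m - k - 2 by omega] at this
  have hid : m.choose k * (k.choose 2 * (m-k).choose 2)
      = m.choose 2 * (m-2).choose 2 * (m-4).choose (k-2) := by
    calc m.choose k * (k.choose 2 * (m-k).choose 2)
        = (m.choose k * k.choose 2) * (m-k).choose 2 := by ring
      _ = m.choose 2 * ((m-2).choose (k-2) * (m-k).choose 2) := by rw [h1]; ring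
      _ = m.choose 2 * ((m-2).choose (m-k) * (m-k).choose 2) := by rw [h2]
      _ = m.choose 2 * ((m-2).choose 2 * (m-4).choose (m-k-2)) := by rw [h3]
      _ = m.choose 2 * (m-2).choose 2 * (m-4).choose (k-2) := by rw [h4]; ring
  -- lower bound for a = C(m-4,k)
  have ha : (m-4).choose 2 ≤ (m-4).choose k := by
    rcases le_or_gt k ((m-4)/2) with h | h
    · exact choose_mono_half (m-4) hk h
    · have hsym : (m-4).choose (m-4-k) = (m-4).choose k :=
        Nat.choose_symm (by omega)
      rw [← hsym]
      exact choose_mono_half (m-4) (by omega) (by omega)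
  -- numeric inequality: C(m,2)*C(m-2,2) < 8*C(m-4,k)*C(k,2)*C(m-k,2)
  have hnum : m.choose 2 * (m-2).choose 2
      < 8 * (m-4).choose k * (k.choose 2 * (m-k).choose 2) := by
    have h4lt : 4 * (m.choose 2 * (m-2).choose 2)
        < 4 * (8 * (m-4).choose 2 * (k.choose 2 * (m-k).choose 2)) := by
      have e1 := two_mul_choose_two m
      have e2 := two_mul_choose_two (m-2)
      have e3 := two_mul_choose_two (m-4)
      have e4 := two_mul_choose_two k
      have e5 := two_mul_choose_two (m-k)
      have l1 : 4 * (m.choose 2 * (m-2).choose 2)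
          = (m * (m-1)) * ((m-2) * (m-2-1)) := by
        calc 4 * (m.choose 2 * (m-2).choose 2)
            = (2 * m.choose 2) * (2 * (m-2).choose 2) := by ring
          _ = (m * (m-1)) * ((m-2) * (m-2-1)) := by rw [e1, e2]
      have l2 : 4 * (8 * (m-4).choose 2 * (k.choose 2 * (m-k).choose 2))
          = 4 * ((2 * (m-4).choose 2) * ((2 * k.choose 2) * (2 * (m-k).choose 2))) := by
        ring
      rw [l1, l2, e3, e4, e5]
      obtain ⟨K, rfl⟩ : ∃ K, k = K + 2 := ⟨k - 2, by omega⟩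
      obtain ⟨j, rfl⟩ : ∃ j, m = 2*K+5+j := ⟨m - (2*K+5), by omega⟩
      have core := numeric_core K j (by omega)
      have r1 : (2*K+5+j) - 1 = 2*K+4+j := by omega
      have r2 : (2*K+5+j) - 2 = 2*K+3+j := by omega
      have r3 : (2*K+3+j) - 1 = 2*K+2+j := by omega
      have r4 : (2*K+5+j) - 4 = 2*K+1+j := by omega
      have r5 : (2*K+1+j) - 1 = 2*K+j := by omega
      have r6 : (K+2) - 1 = K+1 := by omega
      have r7 : (2*K+5+j) - (K+2) = K+3+j := by omega
      have r8 : (K+3+j) - 1 = K+2+j := by omega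
      rw [r1, r2, r3, r4, r5, r6, r7, r8]
      calc (2*K+5+j) * (2*K+4+j) * ((2*K+3+j) * (2*K+2+j))
          = (2*K+5+j) * (2*K+4+j) * (2*K+3+j) * (2*K+2+j) := by ring
        _ < 4 * ((2*K+1+j) * (2*K+j)) * ((K+2)*(K+1)) * ((K+3+j)*(K+2+j)) := core
        _ = 4 * ((2*K+1+j) * (2*K+j) * ((K+2)*(K+1) * ((K+3+j)*(K+2+j)))) := by ring
    have h8 : 8 * (m-4).choose 2 * (k.choose 2 * (m-k).choose 2)
        ≤ 8 * (m-4).choose k * (k.choose 2 * (m-k).choose 2) :=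
      Nat.mul_le_mul_right _ (Nat.mul_le_mul_left _ ha)
    exact lt_of_lt_of_le (Nat.lt_of_mul_lt_mul_left h4lt) h8
  -- combine
  have hbpos : 0 < (m-4).choose (k-2) := Nat.choose_pos (by omega)
  have hmain : m.choose k * (k.choose 2 * (m-k).choose 2)
      < 8 * (m-4).choose k * (m-4).choose (k-2) * (k.choose 2 * (m-k).choose 2) := by
    rw [hid]
    calc m.choose 2 * (m-2).choose 2 * (m-4).choose (k-2)
        < 8 * (m-4).choose k * (k.choose 2 * (m-k).choose 2) * (m-4).choose (k-2) :=
          Nat.mul_lt_mul_of_lt_of_le hnum le_rfl hbpos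
      _ = 8 * (m-4).choose k * (m-4).choose (k-2) * (k.choose 2 * (m-k).choose 2) := by
          ring
  exact Nat.lt_of_mul_lt_mul_right hmain

/-- For all integers `m ≥ 10` and `2 ≤ k ≤ (m-1)/2`,
`C(m-4,k) + 2·C(m-4,k-2) > C(m,k)^{1/2}`. -/
theorem stmt_1 (m k : ℕ) (hm : 10 ≤ m) (hk : 2 ≤ k) (hkm : 2 * k ≤ m - 1) :
    ((m - 4).choose k + 2 * (m - 4).choose (k - 2) : ℝ) >
      ((m.choose k : ℝ)) ^ ((1 : ℝ) / 2) := by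
  have h8 := key_nat m k hm hk hkm
  set a := (m - 4).choose k with ha
  set b := (m - 4).choose (k - 2) with hb
  have hz : ((8 * a * b : ℕ) : ℤ) ≤ (((a + 2 * b)^2 : ℕ) : ℤ) := by
    push_cast
    nlinarith [sq_nonneg ((a:ℤ) - 2*b)]
  have hle : 8 * a * b ≤ (a + 2*b)^2 := by exact_mod_cast hz
  have hkey : m.choose k < (a + 2 * b) ^ 2 := lt_of_lt_of_le h8 hle
  have hbpos : 0 < b := Nat.choose_pos (by omega)
  rw [← Real.sqrt_eq_rpow]
  rw [gt_iff_lt, show ((a:ℝ) + 2 * (b:ℝ)) = ((a + 2*b : ℕ) : ℝ) by push_cast; ring]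
  refine (Real.sqrt_lt' (by positivity)).mpr ?_
  rw [show (((a + 2*b : ℕ):ℝ))^2 = (((a + 2*b)^2 : ℕ) : ℝ) by push_cast; ring]
  exact_mod_cast hkey
end

section
/- For every integer m > 20 and every involution t in the alternating group A_m, the conjugacy class of t in A_m has size less than |A_m|^{11/20}. -/
-- y ≥ 23^(1/20) ⟹ y^18 + y^9 ≤ y^20, stated for x ≥ 23 : x^(9/10) + x^(9/20) ≤ x
lemma aux_real {x : ℝ} (hx : (23:ℝ) ≤ x) :
    x ^ ((9:ℝ)/10) + x ^ ((9:ℝ)/20) ≤ x := by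
  have hx0 : (0:ℝ) < x := by linarith
  set y := x ^ ((1:ℝ)/20) with hy
  have hy0 : 0 < y := Real.rpow_pos_of_pos hx0 _
  have hy20 : y ^ (20:ℕ) = x := by
    rw [hy, ← Real.rpow_natCast (x ^ ((1:ℝ)/20)) 20, ← Real.rpow_mul hx0.le]
    norm_num
  have hy18 : x ^ ((9:ℝ)/10) = y ^ (18:ℕ) := by
    rw [hy, ← Real.rpow_natCast (x ^ ((1:ℝ)/20)) 18, ← Real.rpow_mul hx0.le]
    norm_num
  have hy9 : x ^ ((9:ℝ)/20) = y ^ (9:ℕ) := by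
    rw [hy, ← Real.rpow_natCast (x ^ ((1:ℝ)/20)) 9, ← Real.rpow_mul hx0.le]
    norm_num
  have hyge : (1.16:ℝ) ≤ y := by
    by_contra h
    push_neg at h
    have : y ^ (20:ℕ) < (1.16:ℝ)^(20:ℕ) := by
      exact pow_lt_pow_left₀ h hy0.le (by norm_num)
    rw [hy20] at this
    have : (1.16:ℝ)^(20:ℕ) < 23 := by norm_num
    linarith
  rw [hy18, hy9, ← hy20]
  nlinarith [pow_le_pow_left₀ (by norm_num : (0:ℝ) ≤ 1.16) hyge 9,
    pow_le_pow_left₀ (by norm_num : (0:ℝ) ≤ 1.16) hyge 2,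
    pow_pos hy0 9, pow_pos hy0 18, sq_nonneg y,
    mul_le_mul (pow_le_pow_left₀ (by norm_num : (0:ℝ) ≤ 1.16) hyge 9)
      (pow_le_pow_left₀ (by norm_num : (0:ℝ) ≤ 1.16) hyge 2) (by positivity) (pow_nonneg hy0.le 9)]

-- analytic part: ((m-1)*m)^9 ≤ (2k)^20
lemma aux_nat {m k n : ℕ} (hm : 23 ≤ m) (he : 2*k + n = m) (hn : n^20 < m^9) :
    ((m-1)*m)^9 ≤ (2*k)^20 := by
  have hnm : (n:ℝ) ≤ (m:ℝ) ^ ((9:ℝ)/20) := by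
    have h1 : ((n:ℝ))^(20:ℕ) ≤ ((m:ℝ))^(9:ℕ) := by exact_mod_cast hn.le
    have hm0 : (0:ℝ) < m := by positivity
    calc (n:ℝ) = (((n:ℝ))^(20:ℕ)) ^ ((1:ℝ)/20) := by
          rw [← Real.rpow_natCast (n:ℝ) 20, ← Real.rpow_mul (Nat.cast_nonneg n)]
          norm_num
      _ ≤ (((m:ℝ))^(9:ℕ)) ^ ((1:ℝ)/20) := by
          apply Real.rpow_le_rpow (by positivity) h1 (by norm_num)
      _ = (m:ℝ) ^ ((9:ℝ)/20) := by
          rw [← Real.rpow_natCast (m:ℝ) 9, ← Real.rpow_mul hm0.le]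
          norm_num
  have hm0 : (0:ℝ) < m := by positivity
  have h2k : ((m:ℝ)) ^ ((9:ℝ)/10) ≤ (2*k : ℕ) := by
    have h23 : (23:ℝ) ≤ (m:ℝ) := by exact_mod_cast hm
    have := aux_real h23
    have hcast : ((2*k : ℕ) : ℝ) = (m:ℝ) - (n:ℝ) := by
      have : ((2*k : ℕ) : ℝ) + (n:ℝ) = (m:ℝ) := by exact_mod_cast congrArg (Nat.cast : ℕ → ℝ) he
      linarith
    rw [hcast]
    linarith
  have hfin : ((m:ℝ)^(2:ℕ))^(9:ℕ) ≤ ((2*k:ℕ):ℝ)^(20:ℕ) := by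
    have h1 : (0:ℝ) ≤ (m:ℝ) ^ ((9:ℝ)/10) := by positivity
    calc ((m:ℝ)^(2:ℕ))^(9:ℕ) = (m:ℝ)^(18:ℕ) := by ring
      _ = ((m:ℝ) ^ ((9:ℝ)/10)) ^ (20:ℕ) := by
          rw [← Real.rpow_natCast ((m:ℝ) ^ ((9:ℝ)/10)) 20, ← Real.rpow_mul hm0.le,
            ← Real.rpow_natCast (m:ℝ) 18]
          norm_num
      _ ≤ ((2*k:ℕ):ℝ)^(20:ℕ) := by exact pow_le_pow_left₀ h1 h2k 20
  have hmm : (((m-1)*m : ℕ):ℝ)^(9:ℕ) ≤ ((m:ℝ)^(2:ℕ))^(9:ℕ) := by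
    apply pow_le_pow_left₀ (by positivity)
    have h1 : ((m-1)*m : ℕ) ≤ m*m := Nat.mul_le_mul_right m (Nat.sub_le m 1)
    calc (((m-1)*m : ℕ):ℝ) ≤ ((m*m : ℕ):ℝ) := by exact_mod_cast h1
      _ = (m:ℝ)^(2:ℕ) := by push_cast; ring
  have : (((m-1)*m : ℕ):ℝ)^(9:ℕ) ≤ ((2*k:ℕ):ℝ)^(20:ℕ) := le_trans hmm hfin
  exact_mod_cast this

set_option maxRecDepth 100000 in
set_option maxHeartbeats 2000000 in
lemma base' : ∀ m < 23, ∀ k < 12, ∀ n < 23,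
    ((21 ≤ m ∧ 1 ≤ k ∧ 2*k + n = m) →
      (Nat.factorial m)^9 * 2^11 < (Nat.factorial k * 2^k * Nat.factorial n)^20) := by decide

set_option maxHeartbeats 1000000 in
lemma keyineq : ∀ m, 21 ≤ m → ∀ k n, 1 ≤ k → 2*k + n = m →
    (Nat.factorial m)^9 * 2^11 < (Nat.factorial k * 2^k * Nat.factorial n)^20 := by
  intro m
  induction m using Nat.strong_induction_on with
  | _ m IH =>
    intro hm k n hk he
    rcases lt_or_ge m 23 with hlt | hge
    · exact base' m hlt k (by omega) n (by omega) ⟨hm, hk, he⟩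
    · rcases lt_or_ge (n^20) (m^9) with hB | hA
      · -- case B : use IH at m-2 with (k-1, n)
        have hk2 : 2 ≤ k := by
          by_contra h
          push_neg at h
          interval_cases k
          · -- k = 1, n = m - 2 ≥ 21
            have hn : n = m - 2 := by omega
            have hn2 : 21 ≤ n := by omega
            have : m^9 ≤ n^20 := by
              calc m^9 = (n+2)^9 := by congr 1; omega
                _ ≤ (2*n)^9 := by gcongr; omega
                _ = 2^9 * n^9 := by ring
                _ ≤ n^11 * n^9 := by
                    have h29 : (2:ℕ)^9 ≤ n^11 := by
                      calc (2:ℕ)^9 ≤ 2^11 := by norm_num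
                        _ ≤ n^11 := Nat.pow_le_pow_left (by omega) 11
                    exact Nat.mul_le_mul_right _ h29
                _ = n^20 := by ring
            omega
        obtain ⟨k', rfl⟩ : ∃ k', k = k' + 1 := ⟨k-1, by omega⟩
        have he' : 2*k' + n = m - 2 := by omega
        have h1 := IH (m-2) (by omega) (by omega) k' n (by omega) he'
        have hmm : ((m-1)*m)^9 ≤ (2*(k'+1))^20 := aux_nat hge he hB
        have hfact : Nat.factorial m = (m-1)*m * Nat.factorial (m-2) := by
          have h2 : m - 2 + 1 = m - 1 := by omega
          have h3 : m - 1 + 1 = m := by omega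
          calc Nat.factorial m = Nat.factorial (m-1+1) := by rw [h3]
            _ = (m-1+1) * Nat.factorial (m-1) := Nat.factorial_succ _
            _ = m * Nat.factorial (m-2+1) := by rw [h3, h2]
            _ = m * ((m-2+1) * Nat.factorial (m-2)) := by rw [Nat.factorial_succ]
            _ = (m-1)*m * Nat.factorial (m-2) := by rw [h2]; ring
        calc (Nat.factorial m)^9 * 2^11
            = ((m-1)*m)^9 * ((Nat.factorial (m-2))^9 * 2^11) := by rw [hfact]; ring
          _ ≤ (2*(k'+1))^20 * ((Nat.factorial (m-2))^9 * 2^11) := by gcongr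
          _ < (2*(k'+1))^20 * (Nat.factorial k' * 2^k' * Nat.factorial n)^20 := by
              exact (Nat.mul_lt_mul_left (pow_pos (by omega) 20)).mpr h1
          _ = (Nat.factorial (k'+1) * 2^(k'+1) * Nat.factorial n)^20 := by
              rw [← mul_pow, Nat.factorial_succ]; ring_nf
      · -- case A : use IH at m-1 with (k, n-1)
        have hn1 : 1 ≤ n := by
          by_contra h
          push_neg at h
          interval_cases n
          simp at hA
          omega
        obtain ⟨n', rfl⟩ : ∃ n', n = n' + 1 := ⟨n-1, by omega⟩
        have h1 := IH (m-1) (by omega) (by omega) k n' hk (by omega)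
        have hfact : Nat.factorial m = m * Nat.factorial (m-1) := by
          have h3 : m - 1 + 1 = m := by omega
          calc Nat.factorial m = Nat.factorial (m-1+1) := by rw [h3]
            _ = (m-1+1) * Nat.factorial (m-1) := Nat.factorial_succ _
            _ = m * Nat.factorial (m-1) := by rw [h3]
        calc (Nat.factorial m)^9 * 2^11
            = m^9 * ((Nat.factorial (m-1))^9 * 2^11) := by rw [hfact]; ring
          _ < m^9 * (Nat.factorial k * 2^k * Nat.factorial n')^20 := by
              exact (Nat.mul_lt_mul_left (pow_pos (by omega) 9)).mpr h1
          _ ≤ (n'+1)^20 * (Nat.factorial k * 2^k * Nat.factorial n')^20 := by gcongr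
          _ = (Nat.factorial k * 2^k * Nat.factorial (n'+1))^20 := by
              rw [← mul_pow, Nat.factorial_succ]; ring_nf


open Finset

variable {α : Type*} [DecidableEq α]

def matchings (s : Finset α) (k : ℕ) : Finset (Finset (Finset α)) :=
  (s.powerset.powerset).filter fun P => P.card = k ∧ (∀ p ∈ P, p.card = 2) ∧
    (∀ p ∈ P, ∀ q ∈ P, p ≠ q → Disjoint p q)

lemma mem_matchings {s : Finset α} {k : ℕ} {P : Finset (Finset α)} :
    P ∈ matchings s k ↔ (∀ p ∈ P, p ⊆ s) ∧ P.card = k ∧ (∀ p ∈ P, p.card = 2) ∧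
      (∀ p ∈ P, ∀ q ∈ P, p ≠ q → Disjoint p q) := by
  simp only [matchings, mem_filter, mem_powerset, and_assoc, and_congr_left_iff]
  intro _
  constructor
  · intro h p hp; exact mem_powerset.mp (h hp)
  · intro h q hq; exact mem_powerset.mpr (h q hq)

lemma two_mul_le_of_mem_matchings {s : Finset α} {k : ℕ} {P : Finset (Finset α)}
    (hP : P ∈ matchings s k) : 2 * k ≤ s.card := by
  rw [mem_matchings] at hP
  obtain ⟨hsub, hcard, h2, hdisj⟩ := hP
  have h1 : (P.biUnion (fun p => p)) ⊆ s := by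
    intro x hx
    simp only [mem_biUnion] at hx
    obtain ⟨p, hp, hxp⟩ := hx
    exact hsub p hp hxp
  have h2' : (P.biUnion (fun p => p)).card = 2 * k := by
    rw [card_biUnion (fun p hp q hq hpq => hdisj p hp q hq hpq)]
    rw [Finset.sum_congr rfl (fun p hp => h2 p hp), Finset.sum_const, hcard]
    ring
  calc 2 * k = (P.biUnion (fun p => p)).card := h2'.symm
    _ ≤ s.card := card_le_card h1

lemma matchings_split {s : Finset α} {k : ℕ} {a : α} :
    (matchings s (k+1)).card ≤ (matchings (s.erase a) (k+1)).card
      + ∑ b ∈ s.erase a, (matchings ((s.erase a).erase b) k).card := by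
  classical
  have hsplit := Finset.card_filter_add_card_filter_not
    (s := matchings s (k+1)) (p := fun P => ∀ p ∈ P, a ∉ p)
  rw [← hsplit]
  gcongr
  · -- part A
    intro P hP
    rw [mem_filter] at hP
    obtain ⟨hP, hnot⟩ := hP
    rw [mem_matchings] at hP ⊢
    exact ⟨fun p hp => (subset_erase).mpr ⟨hP.1 p hp, hnot p hp⟩, hP.2⟩
  · -- part B
    rw [← Finset.card_sigma]
    apply Finset.card_le_card_of_surjOn (fun x => insert ({a, x.1} : Finset α) x.2)
    intro P hP
    simp only [coe_filter, Set.mem_setOf_eq] at hP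
    obtain ⟨hP, hex⟩ := hP
    push_neg at hex
    obtain ⟨p, hpP, hap⟩ := hex
    rw [mem_matchings] at hP
    obtain ⟨hsub, hcard, h2, hdisj⟩ := hP
    obtain ⟨x, y, hxy, hpxy⟩ := Finset.card_eq_two.mp (h2 p hpP)
    -- p = {a, b}
    obtain ⟨b, hab, hpab⟩ : ∃ b, a ≠ b ∧ p = {a, b} := by
      subst hpxy
      rcases Finset.mem_insert.mp hap with h | h
      · exact ⟨y, h ▸ hxy, h ▸ rfl⟩
      · rw [Finset.mem_singleton] at h
        exact ⟨x, h ▸ hxy.symm, by rw [h, Finset.pair_comm]⟩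
    refine ⟨⟨b, P.erase p⟩, ?_, ?_⟩
    · simp only [Finset.mem_coe, Finset.mem_sigma]
      constructor
      · exact mem_erase.mpr ⟨hab.symm, hsub p hpP (hpab ▸ mem_insert_of_mem (mem_singleton_self b))⟩
      · rw [mem_matchings]
        refine ⟨?_, ?_, fun q hq => h2 q (mem_of_mem_erase hq),
          fun q hq r hr hqr => hdisj q (mem_of_mem_erase hq) r (mem_of_mem_erase hr) hqr⟩
        · intro q hq
          have hqP := mem_of_mem_erase hq
          have hqp : q ≠ p := (mem_erase.mp hq).1
          have hdq := hdisj q hqP p hpP hqp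
          rw [subset_erase, subset_erase]
          refine ⟨⟨hsub q hqP, ?_⟩, ?_⟩
          · intro haq
            exact (Finset.disjoint_left.mp hdq haq) (hpab ▸ mem_insert_self a {b})
          · intro hbq
            exact (Finset.disjoint_left.mp hdq hbq)
              (hpab ▸ mem_insert_of_mem (mem_singleton_self b))
        · simp [card_erase_of_mem hpP, hcard]
    · simp only
      rw [← hpab, Finset.insert_erase hpP]

lemma matchings_card_bound : ∀ (c : ℕ) (s : Finset α), s.card = c → ∀ (k n : ℕ), c = 2*k + n →
    (matchings s k).card * (Nat.factorial k * 2^k * Nat.factorial n) ≤ Nat.factorial c := by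
  intro c
  induction c using Nat.strong_induction_on with
  | _ c IH =>
    intro s hs k n hc
    match k with
    | 0 =>
      have h1 : matchings s 0 ⊆ {∅} := by
        intro P hP
        rw [mem_matchings] at hP
        simp [Finset.card_eq_zero.mp hP.2.1]
      have h2 : (matchings s 0).card ≤ 1 := le_trans (card_le_card h1) (by simp)
      calc (matchings s 0).card * (Nat.factorial 0 * 2^0 * Nat.factorial n)
          ≤ 1 * (1 * 1 * Nat.factorial n) := by
            apply Nat.mul_le_mul h2; simp [Nat.factorial]
        _ = Nat.factorial n := by ring
        _ = Nat.factorial c := by rw [hc]; ring_nf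
    | k' + 1 =>
      have hcs : 2 ≤ s.card := by omega
      obtain ⟨a, ha⟩ : s.Nonempty := by
        rw [← Finset.card_pos]; omega
      have hsplit := matchings_split (s := s) (k := k') (a := a)
      have hea : (s.erase a).card = c - 1 := by rw [card_erase_of_mem ha, hs]
      -- bound on the sum terms
      have hsum : ∀ b ∈ s.erase a,
          (matchings ((s.erase a).erase b) k').card *
            (Nat.factorial k' * 2^k' * Nat.factorial n) ≤ Nat.factorial (c-2) := by
        intro b hb
        apply IH (c-2) (by omega) _ _ k' n (by omega)
        rw [card_erase_of_mem hb, hea]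
        omega
      -- bound on the erase part
      have herase : (matchings (s.erase a) (k'+1)).card *
          (Nat.factorial (k'+1) * 2^(k'+1) * Nat.factorial n) ≤ n * Nat.factorial (c-1) := by
        match n with
        | 0 =>
          have : matchings (s.erase a) (k'+1) = ∅ := by
            rw [Finset.eq_empty_iff_forall_notMem]
            intro P hP
            have := two_mul_le_of_mem_matchings hP
            rw [hea] at this
            omega
          simp [this]
        | n'' + 1 =>
          have h1 := IH (c-1) (by omega) (s.erase a) hea (k'+1) n'' (by omega)
          calc (matchings (s.erase a) (k'+1)).card *
              (Nat.factorial (k'+1) * 2^(k'+1) * Nat.factorial (n''+1))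
              = ((matchings (s.erase a) (k'+1)).card *
                (Nat.factorial (k'+1) * 2^(k'+1) * Nat.factorial n'')) * (n''+1) := by
                  rw [Nat.factorial_succ n'']; ring
            _ ≤ Nat.factorial (c-1) * (n''+1) := Nat.mul_le_mul_right _ h1
            _ = (n''+1) * Nat.factorial (c-1) := by ring
      -- combine
      have hterms : ∑ b ∈ s.erase a, (matchings ((s.erase a).erase b) k').card *
            (Nat.factorial k' * 2^k' * Nat.factorial n) ≤ (c-1) * Nat.factorial (c-2) := by
        calc ∑ b ∈ s.erase a, (matchings ((s.erase a).erase b) k').card *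
              (Nat.factorial k' * 2^k' * Nat.factorial n)
            ≤ ∑ _b ∈ s.erase a, Nat.factorial (c-2) := Finset.sum_le_sum hsum
          _ = (c-1) * Nat.factorial (c-2) := by rw [Finset.sum_const, hea]; ring
      calc (matchings s (k'+1)).card * (Nat.factorial (k'+1) * 2^(k'+1) * Nat.factorial n)
          ≤ ((matchings (s.erase a) (k'+1)).card
              + ∑ b ∈ s.erase a, (matchings ((s.erase a).erase b) k').card)
              * (Nat.factorial (k'+1) * 2^(k'+1) * Nat.factorial n) :=
            Nat.mul_le_mul_right _ hsplit
        _ = (matchings (s.erase a) (k'+1)).card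
              * (Nat.factorial (k'+1) * 2^(k'+1) * Nat.factorial n)
            + (∑ b ∈ s.erase a, (matchings ((s.erase a).erase b) k').card)
              * (Nat.factorial (k'+1) * 2^(k'+1) * Nat.factorial n) := by ring
        _ = (matchings (s.erase a) (k'+1)).card
              * (Nat.factorial (k'+1) * 2^(k'+1) * Nat.factorial n)
            + (∑ b ∈ s.erase a, (matchings ((s.erase a).erase b) k').card
              * (Nat.factorial k' * 2^k' * Nat.factorial n)) * (2*(k'+1)) := by
              rw [Finset.sum_mul, Finset.sum_mul]
              congr 1
              apply Finset.sum_congr rfl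
              intro b _
              rw [Nat.factorial_succ k']
              ring
        _ ≤ n * Nat.factorial (c-1) + ((c-1) * Nat.factorial (c-2)) * (2*(k'+1)) := by
              gcongr
        _ ≤ Nat.factorial c := by
              have h1 : Nat.factorial (c-1) = (c-1) * Nat.factorial (c-2) := by
                have : c - 2 + 1 = c - 1 := by omega
                rw [← this, Nat.factorial_succ, this]
              have h2 : Nat.factorial c = c * Nat.factorial (c-1) := by
                have : c - 1 + 1 = c := by omega
                rw [← this, Nat.factorial_succ, this]
              rw [h2, h1]
              have : n + 2*(k'+1) = c := by omega
              apply le_of_eq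
              calc n * ((c-1) * Nat.factorial (c-2)) +
                    (c-1) * Nat.factorial (c-2) * (2*(k'+1))
                  = (n + 2*(k'+1)) * ((c-1) * Nat.factorial (c-2)) := by ring
                _ = c * ((c-1) * Nat.factorial (c-2)) := by rw [this]

open Equiv Equiv.Perm in
lemma swap_eq_of_support_eq {β : Type*} [DecidableEq β] [Fintype β] {f g : Perm β}
    (hf : f.IsSwap) (hg : g.IsSwap) (h : f.support = g.support) : f = g := by
  obtain ⟨x, y, hxy, rfl⟩ := hf
  obtain ⟨u, v, huv, rfl⟩ := hg
  rw [support_swap hxy, support_swap huv] at h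
  have hx : x ∈ ({u, v} : Finset β) := h ▸ Finset.mem_insert_self x {y}
  have hy : y ∈ ({u, v} : Finset β) := h ▸ Finset.mem_insert_of_mem (Finset.mem_singleton_self y)
  simp only [Finset.mem_insert, Finset.mem_singleton] at hx hy
  rcases hx with rfl | rfl
  · rcases hy with rfl | rfl
    · exact absurd rfl hxy
    · rfl
  · rcases hy with rfl | rfl
    · exact Equiv.swap_comm _ _
    · exact absurd rfl hxy

open Equiv Equiv.Perm in
lemma factor_support_card_two {β : Type*} [DecidableEq β] [Fintype β] {σ : Perm β} {k : ℕ}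
    (h : σ.cycleType = Multiset.replicate k 2) {c : Perm β} (hc : c ∈ σ.cycleFactorsFinset) :
    c.support.card = 2 := by
  have : c.support.card ∈ σ.cycleType := by
    rw [cycleType_def]
    exact Multiset.mem_map_of_mem _ hc
  rw [h] at this
  exact Multiset.eq_of_mem_replicate this

open Equiv Equiv.Perm in
lemma perm_eq_of_image_support_eq {β : Type*} [DecidableEq β] [Fintype β] {σ τ : Perm β} {k l : ℕ}
    (hσ : σ.cycleType = Multiset.replicate k 2) (hτ : τ.cycleType = Multiset.replicate l 2)
    (h : σ.cycleFactorsFinset.image Equiv.Perm.support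
       = τ.cycleFactorsFinset.image Equiv.Perm.support) : σ = τ := by
  have key : ∀ (σ' τ' : Perm β) (k' l' : ℕ), σ'.cycleType = Multiset.replicate k' 2 →
      τ'.cycleType = Multiset.replicate l' 2 →
      σ'.cycleFactorsFinset.image Equiv.Perm.support
        = τ'.cycleFactorsFinset.image Equiv.Perm.support →
      σ'.cycleFactorsFinset ⊆ τ'.cycleFactorsFinset := by
    intro σ' τ' k' l' hσ' hτ' h' c hc
    have hcs : c.support ∈ τ'.cycleFactorsFinset.image Equiv.Perm.support := by
      rw [← h']
      exact Finset.mem_image_of_mem _ hc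
    obtain ⟨c', hc', hcc'⟩ := Finset.mem_image.mp hcs
    have hsw : c.IsSwap := card_support_eq_two.mp (factor_support_card_two hσ' hc)
    have hsw' : c'.IsSwap := card_support_eq_two.mp (factor_support_card_two hτ' hc')
    rwa [swap_eq_of_support_eq hsw hsw' hcc'.symm]
  apply cycleFactorsFinset_injective
  exact le_antisymm (key σ τ k l hσ hτ h) (key τ σ l k hτ hσ h.symm)

open Equiv Equiv.Perm in
lemma image_support_mem_matchings {m : ℕ} {σ : Perm (Fin m)} {k : ℕ}
    (h : σ.cycleType = Multiset.replicate k 2) :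
    σ.cycleFactorsFinset.image Equiv.Perm.support
      ∈ matchings (Finset.univ : Finset (Fin m)) k := by
  rw [mem_matchings]
  have hinj : Set.InjOn Equiv.Perm.support (σ.cycleFactorsFinset : Set (Perm (Fin m))) := by
    intro c hc c' hc' hcc
    by_contra hne
    have hd := (cycleFactorsFinset_pairwise_disjoint σ) hc hc' hne
    have := hd.disjoint_support
    rw [hcc] at this
    have h2 := factor_support_card_two h (by exact_mod_cast hc')
    rw [disjoint_self] at this
    rw [this] at h2
    simp at h2
  refine ⟨fun p _ => Finset.subset_univ p, ?_, ?_, ?_⟩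
  · rw [Finset.card_image_of_injOn hinj]
    have : Multiset.card σ.cycleType = σ.cycleFactorsFinset.card := by
      rw [cycleType_def, Multiset.card_map]
      rfl
    rw [← this, h, Multiset.card_replicate]
  · intro p hp
    obtain ⟨c, hc, rfl⟩ := Finset.mem_image.mp hp
    exact factor_support_card_two h hc
  · intro p hp q hq hpq
    obtain ⟨c, hc, rfl⟩ := Finset.mem_image.mp hp
    obtain ⟨c', hc', rfl⟩ := Finset.mem_image.mp hq
    have hne : c ≠ c' := fun hcc => hpq (by rw [hcc])
    exact ((cycleFactorsFinset_pairwise_disjoint σ) hc hc' hne).disjoint_support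


open Equiv Equiv.Perm in
/-- For every `m > 20` and every involution `t` in the alternating group `A_m`,
the conjugacy class of `t` in `A_m` has size less than `|A_m|^{11/20}`. -/
theorem stmt_6 (m : ℕ) (hm : 20 < m) (t : alternatingGroup (Fin m))
    (ht : orderOf t = 2) :
    (Nat.card {x : alternatingGroup (Fin m) // IsConj t x} : ℝ) <
      (Nat.card (alternatingGroup (Fin m)) : ℝ) ^ ((11 : ℝ) / 20) := by
  classical
  haveI : Nontrivial (Fin m) := by
    apply Fin.nontrivial_iff_two_le.mpr
    omega
  set σ₀ : Perm (Fin m) := (t : Perm (Fin m)) with hσ₀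
  have hord : orderOf σ₀ = 2 := by
    rw [hσ₀, Subgroup.orderOf_coe, ht]
  set k : ℕ := Multiset.card σ₀.cycleType with hk
  have hrep : σ₀.cycleType = Multiset.replicate k 2 := by
    apply (Multiset.eq_replicate.mpr ⟨rfl, ?_⟩)
    intro b hb
    have h1 : b ∣ 2 := hord ▸ dvd_of_mem_cycleType hb
    have h2 : 2 ≤ b := two_le_of_mem_cycleType hb
    exact le_antisymm (Nat.le_of_dvd (by norm_num) h1) h2
  have hk1 : 1 ≤ k := by
    by_contra hcon
    push_neg at hcon
    interval_cases k
    · have : σ₀.cycleType = 0 := by rw [hrep]; rfl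
      have hone : σ₀ = 1 := cycleType_eq_zero.mp this
      have : orderOf σ₀ = 1 := by rw [hone, orderOf_one]
      omega
  have hsum : 2 * k ≤ m := by
    have h1 : σ₀.cycleType.sum = σ₀.support.card := sum_cycleType σ₀
    have h2 : σ₀.cycleType.sum = 2 * k := by
      rw [hrep, Multiset.sum_replicate, smul_eq_mul]; omega
    have h3 : σ₀.support.card ≤ m := by
      calc σ₀.support.card ≤ Fintype.card (Fin m) := Finset.card_le_univ _
        _ = m := Fintype.card_fin m
    omega
  set n : ℕ := m - 2 * k with hn
  have he : 2 * k + n = m := by omega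
  -- injection from the conjugacy class into matchings
  set MS : Finset (Finset (Finset (Fin m))) := matchings (Finset.univ : Finset (Fin m)) k with hMS
  have hctype : ∀ x : alternatingGroup (Fin m), IsConj t x →
      ((x : Perm (Fin m))).cycleType = Multiset.replicate k 2 := by
    intro x hx
    have hconj : IsConj σ₀ (x : Perm (Fin m)) :=
      ((alternatingGroup (Fin m)).subtype).map_isConj hx
    rw [← isConj_iff_cycleType_eq.mp hconj, hrep]
  set f : {x : alternatingGroup (Fin m) // IsConj t x} → {P // P ∈ MS} :=
    fun x => ⟨((x.1 : Perm (Fin m))).cycleFactorsFinset.image Equiv.Perm.support,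
      image_support_mem_matchings (hctype x.1 x.2)⟩ with hf
  have hfinj : Function.Injective f := by
    intro x y hxy
    have h1 : ((x.1 : Perm (Fin m))).cycleFactorsFinset.image Equiv.Perm.support
        = ((y.1 : Perm (Fin m))).cycleFactorsFinset.image Equiv.Perm.support := by
      have := congrArg Subtype.val hxy
      simpa [hf] using this
    have h2 : (x.1 : Perm (Fin m)) = (y.1 : Perm (Fin m)) :=
      perm_eq_of_image_support_eq (hctype x.1 x.2) (hctype y.1 y.2) h1
    exact Subtype.ext (Subtype.ext h2)
  set N : ℕ := Nat.card {x : alternatingGroup (Fin m) // IsConj t x} with hN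
  have hNle : N ≤ MS.card := by
    have h1 := Nat.card_le_card_of_injective f hfinj
    rwa [Nat.card_eq_fintype_card (α := {P // P ∈ MS}), Fintype.card_coe] at h1
  have hN1 : 1 ≤ N := by
    have : Nonempty {x : alternatingGroup (Fin m) // IsConj t x} := ⟨⟨t, IsConj.refl t⟩⟩
    have := Nat.card_pos (α := {x : alternatingGroup (Fin m) // IsConj t x})
    omega
  -- counting
  set D : ℕ := Nat.factorial k * 2 ^ k * Nat.factorial n with hD
  have hcount : MS.card * D ≤ Nat.factorial m := by
    have h1 := matchings_card_bound m (Finset.univ : Finset (Fin m))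
      (by simp) k n (by omega)
    exact h1
  have hkey : (Nat.factorial m) ^ 9 * 2 ^ 11 < D ^ 20 := keyineq m (by omega) k n hk1 he
  -- group cardinality
  set c : ℕ := Nat.card (alternatingGroup (Fin m)) with hc
  have hcard : 2 * c = Nat.factorial m := by
    rw [hc, Nat.card_eq_fintype_card]
    rw [two_mul_card_alternatingGroup]
    rw [Fintype.card_perm, Fintype.card_fin]
  have hc1 : 1 ≤ c := by
    have := Nat.card_pos (α := alternatingGroup (Fin m))
    omega
  -- nat inequality N^20 < c^11
  have hmain : N ^ 20 < c ^ 11 := by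
    have h1 : N ^ 20 * D ^ 20 ≤ (Nat.factorial m) ^ 20 := by
      calc N ^ 20 * D ^ 20 = (N * D) ^ 20 := (mul_pow N D 20).symm
        _ ≤ (Nat.factorial m) ^ 20 := by
            apply Nat.pow_le_pow_left
            calc N * D ≤ MS.card * D := Nat.mul_le_mul_right _ hNle
              _ ≤ Nat.factorial m := hcount
    have h2 : N ^ 20 * ((Nat.factorial m) ^ 9 * 2 ^ 11) < N ^ 20 * D ^ 20 :=
      (Nat.mul_lt_mul_left (pow_pos (by omega) 20)).mpr hkey
    have h3 : N ^ 20 * ((Nat.factorial m) ^ 9 * 2 ^ 11) < (Nat.factorial m) ^ 20 :=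
      lt_of_lt_of_le h2 h1
    rw [← hcard] at h3
    have h4 : (2 ^ 20 * c ^ 9) * N ^ 20 < (2 ^ 20 * c ^ 9) * c ^ 11 := by
      calc (2 ^ 20 * c ^ 9) * N ^ 20 = N ^ 20 * ((2 * c) ^ 9 * 2 ^ 11) := by ring
        _ < (2 * c) ^ 20 := h3
        _ = (2 ^ 20 * c ^ 9) * c ^ 11 := by ring
    exact Nat.lt_of_mul_lt_mul_left h4
  -- pass to the reals
  have hmainR : ((N : ℝ)) ^ (20 : ℕ) < ((c : ℝ)) ^ (11 : ℕ) := by exact_mod_cast hmain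
  have hN0 : (0 : ℝ) ≤ (N : ℝ) := Nat.cast_nonneg N
  have hc0 : (0 : ℝ) < (c : ℝ) := by exact_mod_cast hc1
  calc (N : ℝ) = (((N : ℝ)) ^ (20 : ℕ)) ^ ((1 : ℝ) / 20) := by
        rw [← Real.rpow_natCast (N : ℝ) 20, ← Real.rpow_mul hN0]
        norm_num
    _ < (((c : ℝ)) ^ (11 : ℕ)) ^ ((1 : ℝ) / 20) := by
        apply Real.rpow_lt_rpow (by positivity) hmainR (by norm_num)
    _ = (c : ℝ) ^ ((11 : ℝ) / 20) := by
        rw [← Real.rpow_natCast (c : ℝ) 11, ← Real.rpow_mul hc0.le]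
        norm_num
end

section
/- Let p be an odd prime, and in AGL_d(p) = V:GL_d(p) let t = (e_1, x_k) where x_k = diag(-I_k, I_{d-k}). Then the centralizer of t in AGL_d(p) has order p^{d-k}·|GL_k(p)|·|GL_{d-k}(p)|. -/
/-- Let `p` be an odd prime and `t = (e₁, x_k) ∈ AGL_d(p)` where `x_k = diag(-I_k, I_{d-k})`,
i.e. `t : u ↦ e₁ + x_k(u)`. The centralizer of `t` in `AGL_d(p)` (the affine
transformations of `V = (F_p)^d` commuting with `t`) has order
`p^{d-k}·|GL_k(p)|·|GL_{d-k}(p)|`. -/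
theorem stmt_10 (p d k : ℕ) (hp : p.Prime) (hodd : Odd p) (hk1 : 1 ≤ k) (hkd : k ≤ d) :
    ∀ (xk : (Fin d → ZMod p) → (Fin d → ZMod p))
      (e1 : Fin d → ZMod p) (t : (Fin d → ZMod p) → (Fin d → ZMod p)),
      (∀ u i, xk u i = if (i : ℕ) < k then -u i else u i) →
      (∀ i, e1 i = if (i : ℕ) = 0 then 1 else 0) →
      (∀ u, t u = e1 + xk u) →
      Nat.card {g : (Fin d → ZMod p) → (Fin d → ZMod p) //
          (∃ (v : Fin d → ZMod p) (A : (Fin d → ZMod p) ≃ₗ[ZMod p] (Fin d → ZMod p)),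
            ∀ u, g u = v + A u) ∧ g ∘ t = t ∘ g} =
        p ^ (d - k) * Nat.card (GL (Fin k) (ZMod p)) * Nat.card (GL (Fin (d - k)) (ZMod p)) := by
  intro xk e1 t hxk he1 ht
  haveI : Fact p.Prime := ⟨hp⟩
  have h2 : (2 : ZMod p) ≠ 0 := by
    intro h
    have h2' : ((2 : ℕ) : ZMod p) = 0 := by exact_mod_cast h
    have hdvd : p ∣ 2 := (ZMod.natCast_eq_zero_iff 2 p).mp h2'
    have hp2 : p = 2 := (Nat.prime_dvd_prime_iff_eq hp Nat.prime_two).mp hdvd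
    rw [hp2] at hodd
    exact (Nat.not_odd_iff_even.mpr even_two) hodd
  haveI : Invertible (2 : ZMod p) := invertibleOfNonzero h2
  -- torsion-freeness at 2
  have htor : ∀ {n : ℕ} (x : Fin n → ZMod p), x + x = 0 → x = 0 := by
    intro n x h
    funext i
    have hi : x i + x i = 0 := by
      have := congrFun h i
      simpa using this
    have h2x : (2 : ZMod p) * x i = 0 := by rw [two_mul]; exact hi
    exact (mul_eq_zero.mp h2x).resolve_left h2
  have hhalf : ∀ {n : ℕ} (x y : Fin n → ZMod p), x + x = y → x = ⅟(2:ZMod p) • y := by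
    intro n x y h
    rw [← h, ← two_smul (ZMod p) x, smul_smul, invOf_mul_self, one_smul]
  -- the coordinate splitting
  let ι : Fin k ⊕ Fin (d - k) ≃ Fin d := finSumFinEquiv.trans (finCongr (Nat.add_sub_cancel' hkd))
  have hι1 : ∀ i : Fin k, ((ι (Sum.inl i)) : ℕ) = (i : ℕ) := by intro i; simp [ι]
  have hι2 : ∀ j : Fin (d - k), ((ι (Sum.inr j)) : ℕ) = k + (j : ℕ) := by intro j; simp [ι]
  let e : (Fin d → ZMod p) ≃ₗ[ZMod p] (Fin k → ZMod p) × (Fin (d - k) → ZMod p) :=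
    (LinearEquiv.funCongrLeft (ZMod p) (ZMod p) ι).trans (LinearEquiv.sumArrowLequivProdArrow _ _ (ZMod p) (ZMod p))
  have he : ∀ v : Fin d → ZMod p, e v = (fun i => v (ι (Sum.inl i)), fun j => v (ι (Sum.inr j))) := by
    intro v; rfl
  have E1 : ∀ u, e (xk u) = (-(e u).1, (e u).2) := by
    intro u
    rw [he, he]
    refine Prod.ext ?_ ?_
    · funext i
      show xk u (ι (Sum.inl i)) = (-(fun i => u (ι (Sum.inl i)))) i
      rw [hxk, if_pos (by rw [hι1]; exact i.isLt)]
      simp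
    · funext j
      show xk u (ι (Sum.inr j)) = u (ι (Sum.inr j))
      rw [hxk, if_neg (by rw [hι2]; omega)]
  have E1' : ∀ z : (Fin k → ZMod p) × (Fin (d - k) → ZMod p), xk (e.symm z) = e.symm (-z.1, z.2) := by
    intro z
    apply e.injective
    rw [E1]
    simp
  have hε2 : (e e1).2 = 0 := by
    funext j
    show (e e1).2 j = 0
    rw [he]
    show e1 (ι (Sum.inr j)) = 0
    rw [he1, if_neg (by rw [hι2]; omega)]
  set ε : Fin k → ZMod p := (e e1).1 with hε
  have hE2 : e e1 = (ε, 0) := Prod.ext rfl hε2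
  have hxk0 : xk 0 = 0 := by funext i; simp [hxk]
  have hxkadd : ∀ a b, xk (a + b) = xk a + xk b := by
    intro a b; funext i
    simp only [hxk, Pi.add_apply]
    split <;> ring
  -- criterion for commuting with t
  have hcrit : ∀ (v : Fin d → ZMod p) (A : (Fin d → ZMod p) ≃ₗ[ZMod p] (Fin d → ZMod p)),
      ((fun u => v + A u) ∘ t = t ∘ (fun u => v + A u)) ↔
      ((∀ u, A (xk u) = xk (A u)) ∧ v + A e1 = e1 + xk v) := by
    intro v A
    constructor
    · intro h
      have h' : ∀ u, v + A (t u) = t (v + A u) := fun u => congrFun h u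
      have h0 := h' 0
      rw [ht, ht, hxk0, add_zero, map_zero, add_zero] at h0
      refine ⟨?_, h0⟩
      intro u
      have hu := h' u
      rw [ht, ht, map_add, hxkadd] at hu
      have hcomb : (v + A e1) + A (xk u) = (e1 + xk v) + xk (A u) := by
        rw [add_assoc, add_assoc]; exact hu
      rw [h0] at hcomb
      exact add_left_cancel hcomb
    · rintro ⟨hA, hv⟩
      funext u
      show v + A (t u) = t (v + A u)
      rw [ht, ht, map_add, hxkadd, hA, ← add_assoc, hv, add_assoc]
  -- the commuting conditions hold for constructed elements
  have hcond : ∀ (w : Fin (d-k) → ZMod p) (B : (Fin k → ZMod p) ≃ₗ[ZMod p] (Fin k → ZMod p))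
      (C : (Fin (d-k) → ZMod p) ≃ₗ[ZMod p] (Fin (d-k) → ZMod p)),
      (∃ (v : Fin d → ZMod p) (A : (Fin d → ZMod p) ≃ₗ[ZMod p] (Fin d → ZMod p)),
        ∀ u, (fun u => e.symm (⅟(2:ZMod p) • (ε - B ε), w) + (e.trans ((B.prodCongr C).trans e.symm)) u) u
          = v + A u) ∧
      (fun u => e.symm (⅟(2:ZMod p) • (ε - B ε), w) + (e.trans ((B.prodCongr C).trans e.symm)) u) ∘ t
        = t ∘ (fun u => e.symm (⅟(2:ZMod p) • (ε - B ε), w) + (e.trans ((B.prodCongr C).trans e.symm)) u) := by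
    intro w B C
    refine ⟨⟨_, _, fun u => rfl⟩, (hcrit _ _).mpr ⟨?_, ?_⟩⟩
    · intro u
      simp only [LinearEquiv.trans_apply]
      rw [E1, E1']
      simp [LinearEquiv.prodCongr_apply]
    · apply e.injective
      rw [map_add, map_add, E1]
      simp only [LinearEquiv.trans_apply, LinearEquiv.apply_symm_apply]
      rw [hE2]
      simp only [LinearEquiv.prodCongr_apply, map_zero]
      have hy : ⅟(2:ZMod p) • (ε - B ε) + ⅟(2:ZMod p) • (ε - B ε) = ε - B ε := by
        rw [← two_smul (ZMod p), smul_smul, mul_invOf_self, one_smul]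
      refine Prod.ext ?_ ?_
      · simp only [Prod.fst_add]
        linear_combination hy
      · simp only [Prod.snd_add]
        rw [add_zero, zero_add]
  -- the bijection
  let f : (Fin (d-k) → ZMod p) × ((Fin k → ZMod p) ≃ₗ[ZMod p] (Fin k → ZMod p)) × ((Fin (d-k) → ZMod p) ≃ₗ[ZMod p] (Fin (d-k) → ZMod p))
      → {g : (Fin d → ZMod p) → (Fin d → ZMod p) //
          (∃ (v : Fin d → ZMod p) (A : (Fin d → ZMod p) ≃ₗ[ZMod p] (Fin d → ZMod p)), ∀ u, g u = v + A u)
          ∧ g ∘ t = t ∘ g} :=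
    fun wBC => ⟨fun u => e.symm (⅟(2:ZMod p) • (ε - wBC.2.1 ε), wBC.1)
        + (e.trans ((wBC.2.1.prodCongr wBC.2.2).trans e.symm)) u,
      hcond wBC.1 wBC.2.1 wBC.2.2⟩
  have hbij : Function.Bijective f := by
    constructor
    · rintro ⟨w, B, C⟩ ⟨w', B', C'⟩ hxy
      have hfun : ∀ u, e.symm (⅟(2:ZMod p) • (ε - B ε), w) + (e.trans ((B.prodCongr C).trans e.symm)) u
          = e.symm (⅟(2:ZMod p) • (ε - B' ε), w') + (e.trans ((B'.prodCongr C').trans e.symm)) u :=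
        fun u => congrFun (congrArg Subtype.val hxy) u
      have hv : e.symm (⅟(2:ZMod p) • (ε - B ε), w) = e.symm (⅟(2:ZMod p) • (ε - B' ε), w') := by
        have := hfun 0
        simpa using this
      have hA : ∀ u, (e.trans ((B.prodCongr C).trans e.symm)) u = (e.trans ((B'.prodCongr C').trans e.symm)) u :=
        fun u => add_left_cancel (hv ▸ hfun u)
      have hBC : ∀ z, (B.prodCongr C) z = (B'.prodCongr C') z := by
        intro z
        have := hA (e.symm z)
        simp only [LinearEquiv.trans_apply, LinearEquiv.apply_symm_apply] at this
        exact e.symm.injective this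
      have hw : w = w' := congrArg Prod.snd (e.symm.injective hv)
      have hB : B = B' := by
        apply LinearEquiv.toLinearMap_injective
        apply LinearMap.ext
        intro x
        have := hBC (x, 0)
        simpa [LinearEquiv.prodCongr_apply] using congrArg Prod.fst this
      have hC : C = C' := by
        apply LinearEquiv.toLinearMap_injective
        apply LinearMap.ext
        intro x
        have := hBC (0, x)
        simpa [LinearEquiv.prodCongr_apply] using congrArg Prod.snd this
      simp [hw, hB, hC]
    · rintro ⟨g, ⟨v, A, hg⟩, hcomm⟩
      have hgf : (fun u => v + A u) = g := funext fun u => (hg u).symm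
      obtain ⟨hA, hv⟩ := (hcrit v A).mp (by rw [hgf]; exact hcomm)
      have hAs : ∀ u, A.symm (xk u) = xk (A.symm u) := by
        intro u
        apply A.injective
        rw [A.apply_symm_apply, hA, A.apply_symm_apply]
      have key : ∀ (D : (Fin d → ZMod p) ≃ₗ[ZMod p] (Fin d → ZMod p)), (∀ u, D (xk u) = xk (D u)) →
          (∀ x : Fin k → ZMod p, (e (D (e.symm (x, 0)))).2 = 0)
          ∧ (∀ x : Fin (d-k) → ZMod p, (e (D (e.symm (0, x)))).1 = 0) := by
        intro D hD
        constructor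
        · intro x
          apply htor
          have h1 : xk (e.symm ((x, 0) : (Fin k → ZMod p) × (Fin (d-k) → ZMod p)))
              = -(e.symm ((x, 0) : (Fin k → ZMod p) × (Fin (d-k) → ZMod p))) := by
            rw [E1']
            show e.symm (-x, 0) = _
            rw [show ((-x, 0) : (Fin k → ZMod p) × (Fin (d-k) → ZMod p)) = -(x, 0) by simp, map_neg]
          have h2' := hD (e.symm (x, 0))
          rw [h1, map_neg] at h2'
          have h3 := congrArg e h2'
          rw [map_neg, E1] at h3
          have h4 := congrArg Prod.snd h3
          simp only [Prod.snd_neg] at h4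
          exact neg_eq_iff_add_eq_zero.mp h4
        · intro x
          apply htor
          have h1 : xk (e.symm ((0, x) : (Fin k → ZMod p) × (Fin (d-k) → ZMod p)))
              = e.symm ((0, x) : (Fin k → ZMod p) × (Fin (d-k) → ZMod p)) := by
            rw [E1']; show e.symm (-0, x) = _; rw [neg_zero]
          have h2' := hD (e.symm (0, x))
          rw [h1] at h2'
          have h3 := congrArg e h2'
          rw [E1] at h3
          have h4 := congrArg Prod.fst h3
          exact neg_eq_iff_add_eq_zero.mp h4.symm
      obtain ⟨ksnd, kfst⟩ := key A hA
      obtain ⟨ksnd', kfst'⟩ := key A.symm hAs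
      -- build B
      let bmap : (Fin k → ZMod p) →ₗ[ZMod p] (Fin k → ZMod p) :=
        (LinearMap.fst (ZMod p) _ _) ∘ₗ (e.symm.trans (A.trans e)).toLinearMap ∘ₗ (LinearMap.inl (ZMod p) _ _)
      let bmap' : (Fin k → ZMod p) →ₗ[ZMod p] (Fin k → ZMod p) :=
        (LinearMap.fst (ZMod p) _ _) ∘ₗ (e.symm.trans (A.symm.trans e)).toLinearMap ∘ₗ (LinearMap.inl (ZMod p) _ _)
      have hbmap : ∀ x, bmap x = (e (A (e.symm (x, 0)))).1 := fun x => rfl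
      have hbmap' : ∀ x, bmap' x = (e (A.symm (e.symm (x, 0)))).1 := fun x => rfl
      let B : (Fin k → ZMod p) ≃ₗ[ZMod p] (Fin k → ZMod p) := LinearEquiv.ofLinear bmap bmap'
        (by
          apply LinearMap.ext; intro x
          simp only [LinearMap.comp_apply, LinearMap.id_apply]
          rw [hbmap', hbmap]
          have hz : ((e (A.symm (e.symm ((x, 0) : (Fin k → ZMod p) × (Fin (d-k) → ZMod p))))).1,
              (0 : Fin (d-k) → ZMod p)) = e (A.symm (e.symm (x, 0))) := Prod.ext rfl (ksnd' x).symm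
          rw [hz]
          simp)
        (by
          apply LinearMap.ext; intro x
          simp only [LinearMap.comp_apply, LinearMap.id_apply]
          rw [hbmap, hbmap']
          have hz : ((e (A (e.symm ((x, 0) : (Fin k → ZMod p) × (Fin (d-k) → ZMod p))))).1,
              (0 : Fin (d-k) → ZMod p)) = e (A (e.symm (x, 0))) := Prod.ext rfl (ksnd x).symm
          rw [hz]
          simp)
      let cmap : (Fin (d-k) → ZMod p) →ₗ[ZMod p] (Fin (d-k) → ZMod p) :=
        (LinearMap.snd (ZMod p) _ _) ∘ₗ (e.symm.trans (A.trans e)).toLinearMap ∘ₗ (LinearMap.inr (ZMod p) _ _)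
      let cmap' : (Fin (d-k) → ZMod p) →ₗ[ZMod p] (Fin (d-k) → ZMod p) :=
        (LinearMap.snd (ZMod p) _ _) ∘ₗ (e.symm.trans (A.symm.trans e)).toLinearMap ∘ₗ (LinearMap.inr (ZMod p) _ _)
      have hcmap : ∀ x, cmap x = (e (A (e.symm (0, x)))).2 := fun x => rfl
      have hcmap' : ∀ x, cmap' x = (e (A.symm (e.symm (0, x)))).2 := fun x => rfl
      let C : (Fin (d-k) → ZMod p) ≃ₗ[ZMod p] (Fin (d-k) → ZMod p) := LinearEquiv.ofLinear cmap cmap'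
        (by
          apply LinearMap.ext; intro x
          simp only [LinearMap.comp_apply, LinearMap.id_apply]
          rw [hcmap', hcmap]
          have hz : ((0 : Fin k → ZMod p),
              (e (A.symm (e.symm ((0, x) : (Fin k → ZMod p) × (Fin (d-k) → ZMod p))))).2)
              = e (A.symm (e.symm (0, x))) := Prod.ext (kfst' x).symm rfl
          rw [hz]
          simp)
        (by
          apply LinearMap.ext; intro x
          simp only [LinearMap.comp_apply, LinearMap.id_apply]
          rw [hcmap, hcmap']
          have hz : ((0 : Fin k → ZMod p),
              (e (A (e.symm ((0, x) : (Fin k → ZMod p) × (Fin (d-k) → ZMod p))))).2)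
              = e (A (e.symm (0, x))) := Prod.ext (kfst x).symm rfl
          rw [hz]
          simp)
      have hBx : ∀ x, B x = (e (A (e.symm (x, 0)))).1 := fun x => rfl
      have hCx : ∀ x, C x = (e (A (e.symm (0, x)))).2 := fun x => rfl
      have hBC : ∀ z, (B.prodCongr C) z = e (A (e.symm z)) := by
        intro z
        have hzsplit : z = ((z.1, 0) : (Fin k → ZMod p) × (Fin (d-k) → ZMod p)) + (0, z.2) := by
          simp
        conv_rhs => rw [hzsplit]
        rw [map_add, map_add, map_add]
        have e1' : e (A (e.symm ((z.1, 0) : (Fin k → ZMod p) × (Fin (d-k) → ZMod p))))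
            = ((e (A (e.symm (z.1, 0)))).1, 0) := Prod.ext rfl (ksnd z.1)
        have e2' : e (A (e.symm ((0, z.2) : (Fin k → ZMod p) × (Fin (d-k) → ZMod p))))
            = (0, (e (A (e.symm (0, z.2)))).2) := Prod.ext (kfst z.2) rfl
        rw [e1', e2']
        rw [LinearEquiv.prodCongr_apply, hBx, hCx]
        simp
      refine ⟨((e v).2, B, C), ?_⟩
      apply Subtype.ext
      show (fun u => e.symm (⅟(2:ZMod p) • (ε - B ε), (e v).2)
          + (e.trans ((B.prodCongr C).trans e.symm)) u) = g
      rw [← hgf]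
      funext u
      have hAeq : (e.trans ((B.prodCongr C).trans e.symm)) u = A u := by
        simp only [LinearEquiv.trans_apply]
        rw [hBC]
        simp
      have he1e : e1 = e.symm (ε, 0) := by rw [← hE2, e.symm_apply_apply]
      have hAe1 : e (A e1) = (B ε, 0) := by
        rw [he1e]
        exact Prod.ext (hBx ε).symm (ksnd ε)
      have h5 := congrArg e hv
      rw [map_add, map_add, E1, hAe1, hE2] at h5
      have h6 : (e v).1 + (e v).1 = ε - B ε := by
        have h7 := congrArg Prod.fst h5
        simp only [Prod.fst_add, Prod.fst_neg] at h7
        linear_combination h7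
      have hveq : e.symm (⅟(2:ZMod p) • (ε - B ε), (e v).2) = v := by
        rw [← hhalf _ _ h6]
        simp
      rw [hAeq, hveq]
  rw [← Nat.card_eq_of_bijective f hbij]
  rw [Nat.card_prod, Nat.card_prod, Nat.card_fun, Nat.card_zmod]
  have hGL1 : Nat.card ((Fin k → ZMod p) ≃ₗ[ZMod p] (Fin k → ZMod p)) = Nat.card (GL (Fin k) (ZMod p)) :=
    (Nat.card_congr (Matrix.GeneralLinearGroup.toLin.trans
      (LinearMap.GeneralLinearGroup.generalLinearEquiv (ZMod p) (Fin k → ZMod p))).toEquiv).symm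
  have hGL2 : Nat.card ((Fin (d-k) → ZMod p) ≃ₗ[ZMod p] (Fin (d-k) → ZMod p)) = Nat.card (GL (Fin (d-k)) (ZMod p)) :=
    (Nat.card_congr (Matrix.GeneralLinearGroup.toLin.trans
      (LinearMap.GeneralLinearGroup.generalLinearEquiv (ZMod p) (Fin (d-k) → ZMod p))).toEquiv).symm
  rw [hGL1, hGL2]
  simp [Nat.card_eq_fintype_card, mul_assoc]
end

section
/- For every prime p ≥ 13 with p ≡ 1 (mod 4), the inequality 2^{(p-1)/2}·((p-1)/2)! > (p-1)·((p-2)!)^{4/9} holds. -/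
lemma aux_pow5 (m : ℕ) (hm : 7 ≤ m) : (2*m)^5 < 2^m * m.factorial := by
  induction m, hm using Nat.le_induction with
  | base => norm_num [Nat.factorial]
  | succ n hn ih =>
    have ha : (n+1)^2 ≤ 2*n^2 := by nlinarith
    have h1 : (n+1)^4 ≤ 2*n^5 := by
      calc (n+1)^4 = ((n+1)^2)^2 := by ring
        _ ≤ (2*n^2)^2 := Nat.pow_le_pow_left ha 2
        _ = 4*n^4 := by ring
        _ = 2*(2*n^4) := by ring
        _ ≤ 2*(n*n^4) := by gcongr; omega
        _ = 2*n^5 := by ring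
    calc (2*(n+1))^5 = 32*(n+1)*(n+1)^4 := by ring
      _ ≤ 32*(n+1)*(2*n^5) := by gcongr
      _ = 2*(n+1) * (2*n)^5 := by ring
      _ < 2*(n+1) * (2^n * n.factorial) := by
          exact (Nat.mul_lt_mul_left (by omega)).mpr ih
      _ = 2^(n+1) * (n+1).factorial := by
          rw [Nat.factorial_succ, pow_succ]; ring

lemma aux_central (m : ℕ) : (2*m).factorial ≤ (2^m * m.factorial)^2 := by
  induction m with
  | zero => simp
  | succ n ih =>
    have e : 2*(n+1) = (2*n+1)+1 := by ring
    rw [e, Nat.factorial_succ, Nat.factorial_succ]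
    calc ((2*n+1)+1) * ((2*n+1) * (2*n).factorial)
        ≤ (2*n+2) * ((2*n+2) * (2*n).factorial) := by gcongr; omega
      _ ≤ (2*n+2) * ((2*n+2) * (2^n * n.factorial)^2) := by gcongr
      _ = (2^(n+1) * ((n+1) * n.factorial))^2 := by ring

lemma aux_key (m : ℕ) (hm : 6 ≤ m) :
    (2*m)^9 * ((2*m-1).factorial)^4 < (2^m * m.factorial)^9 := by
  rcases eq_or_lt_of_le hm with h | h
  · subst h; norm_num [Nat.factorial]
  · have hm7 : 7 ≤ m := h
    have hfac : (2*m).factorial = (2*m) * (2*m-1).factorial := by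
      have e : 2*m = (2*m-1)+1 := by omega
      rw [e, Nat.factorial_succ]; simp
    have h2 : (2*m).factorial ≤ (2^m * m.factorial)^2 := aux_central m
    have h5 : (2*m)^5 < 2^m * m.factorial := aux_pow5 m hm7
    calc (2*m)^9 * ((2*m-1).factorial)^4
        = (2*m)^5 * ((2*m) * (2*m-1).factorial)^4 := by ring
      _ = (2*m)^5 * ((2*m).factorial)^4 := by rw [hfac]
      _ ≤ (2*m)^5 * ((2^m * m.factorial)^2)^4 := by gcongr
      _ = (2*m)^5 * (2^m * m.factorial)^8 := by ring
      _ < (2^m * m.factorial) * (2^m * m.factorial)^8 := by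
          have hpos : 0 < (2^m * m.factorial)^8 := by positivity
          exact (Nat.mul_lt_mul_right hpos).mpr h5
      _ = (2^m * m.factorial)^9 := by ring

/-- For every prime `p ≥ 13` with `p ≡ 1 (mod 4)`,
`2^{(p-1)/2} · ((p-1)/2)! > (p-1) · ((p-2)!)^{4/9}`. -/
theorem stmt_11 (p : ℕ) (hp : p.Prime) (hp13 : 13 ≤ p) (hp1 : p % 4 = 1) :
    (2 : ℝ) ^ ((p - 1) / 2) * (((p - 1) / 2).factorial : ℝ) >
      ((p : ℝ) - 1) * ((p - 2).factorial : ℝ) ^ ((4 : ℝ) / 9) := by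
  set m := (p-1)/2 with hmdef
  have hpm : p = 2*m+1 := by omega
  have h6 : 6 ≤ m := by omega
  have key : (p-1)^9 * ((p-2).factorial)^4 < (2^m * m.factorial)^9 := by
    have e1 : p - 1 = 2*m := by omega
    have e2 : p - 2 = 2*m - 1 := by omega
    rw [e1, e2]; exact aux_key m h6
  have hA : (0:ℝ) ≤ ((p-2).factorial : ℝ) := Nat.cast_nonneg _
  have hx : (0:ℝ) < 2^m * (m.factorial:ℝ) := by positivity
  apply lt_of_pow_lt_pow_left₀ 9 (le_of_lt hx)
  have e9 : (((p-2).factorial:ℝ)^((4:ℝ)/9))^(9:ℕ) = ((p-2).factorial:ℝ)^(4:ℕ) := by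
    rw [← Real.rpow_natCast (((p-2).factorial:ℝ)^((4:ℝ)/9)) 9, ← Real.rpow_mul hA,
      ← Real.rpow_natCast ((p-2).factorial:ℝ) 4]
    norm_num
  rw [mul_pow, e9]
  have keyR : (((p-1)^9 * ((p-2).factorial)^4 : ℕ) : ℝ) < (((2^m * m.factorial)^9 : ℕ):ℝ) := by
    exact_mod_cast key
  push_cast [Nat.cast_sub (by omega : 1 ≤ p)] at keyR
  linarith [keyR]
end

section
/- For every prime p ≡ 1 (mod 4), the inequality 2^{(p-1)/2}·((p-1)/2)! ≤ (p-1)·((p-2)!)^{1/2} holds. -/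
lemma aux_stmt12 (m : ℕ) (hm : 1 ≤ m) :
    4 ^ m * m.factorial ^ 2 ≤ (2 * m) ^ 2 * (2 * m - 1).factorial := by
  have h1 : 4 ^ m ≤ 2 * m * m.centralBinom :=
    Nat.four_pow_le_two_mul_self_mul_centralBinom m hm
  have h2 : m.centralBinom * m.factorial ^ 2 = (2 * m).factorial := by
    have := Nat.choose_mul_factorial_mul_factorial (Nat.le_mul_of_pos_left m (by norm_num) : m ≤ 2 * m)
    simp only [Nat.centralBinom, two_mul, Nat.add_sub_cancel] at *
    rw [sq, ← mul_assoc, this]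
  have h3 : (2 * m).factorial = 2 * m * (2 * m - 1).factorial := by
    obtain ⟨k, rfl⟩ : ∃ k, m = k + 1 := ⟨m - 1, (Nat.succ_pred_eq_of_pos hm).symm⟩
    have : 2 * (k + 1) = (2 * (k + 1) - 1) + 1 := by omega
    rw [this, Nat.factorial_succ, ← this]
  calc 4 ^ m * m.factorial ^ 2 ≤ 2 * m * m.centralBinom * m.factorial ^ 2 :=
        Nat.mul_le_mul_right _ h1
    _ = 2 * m * (2 * m).factorial := by rw [mul_assoc, h2]
    _ = (2 * m) ^ 2 * (2 * m - 1).factorial := by rw [h3]; ring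

/-- For every prime `p ≡ 1 (mod 4)`,
`2^{(p-1)/2} · ((p-1)/2)! ≤ (p-1) · ((p-2)!)^{1/2}`. -/
theorem stmt_12 (p : ℕ) (hp : p.Prime) (hp1 : p % 4 = 1) :
    (2 : ℝ) ^ ((p - 1) / 2) * (((p - 1) / 2).factorial : ℝ) ≤
      ((p : ℝ) - 1) * ((p - 2).factorial : ℝ) ^ ((1 : ℝ) / 2) := by
  have hp5 : 5 ≤ p := by
    have := hp.two_le; omega
  set m := (p - 1) / 2 with hm
  have hm1 : 1 ≤ m := by omega
  have h2m : 2 * m = p - 1 := by omega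
  have key := aux_stmt12 m hm1
  rw [h2m, show p - 1 - 1 = p - 2 from by omega] at key
  have keyR : (4 : ℝ) ^ m * (m.factorial : ℝ) ^ 2 ≤ ((p : ℝ) - 1) ^ 2 * ((p - 2).factorial : ℝ) := by
    have hcast : ((p - 1 : ℕ) : ℝ) = (p : ℝ) - 1 := by
      push_cast [Nat.cast_sub (by omega : 1 ≤ p)]; ring
    calc (4 : ℝ) ^ m * (m.factorial : ℝ) ^ 2
        = ((4 ^ m * m.factorial ^ 2 : ℕ) : ℝ) := by push_cast; ring
      _ ≤ (((p - 1) ^ 2 * (p - 2).factorial : ℕ) : ℝ) := by exact_mod_cast Nat.cast_le.mpr key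
      _ = ((p : ℝ) - 1) ^ 2 * ((p - 2).factorial : ℝ) := by rw [Nat.cast_mul, Nat.cast_pow, hcast]
  rw [← Real.sqrt_eq_rpow]
  have hb : (0 : ℝ) ≤ (p : ℝ) - 1 := by
    have : (5 : ℝ) ≤ (p : ℝ) := by exact_mod_cast hp5
    linarith
  rw [show ((p : ℝ) - 1) * Real.sqrt ((p - 2).factorial : ℝ)
      = Real.sqrt (((p : ℝ) - 1) ^ 2 * ((p - 2).factorial : ℝ)) by
    rw [Real.sqrt_mul (by positivity), Real.sqrt_sq hb]]
  refine Real.le_sqrt_of_sq_le ?_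
  calc ((2 : ℝ) ^ m * (m.factorial : ℝ)) ^ 2 = (4 : ℝ) ^ m * (m.factorial : ℝ) ^ 2 := by
        rw [mul_pow, ← pow_mul, pow_mul']; norm_num
    _ ≤ _ := keyR
end

section
/- Let T = A_m with m > 20, let H_0 ≤ T be a subgroup of even order, and set n = |T : H_0|. Suppose |H_0| ≤ |T|^α and every involution t ∈ H_0 satisfies |t^T| ≤ |T|^β, where 5 - 5α - 9β > 0. Then some involution t ∈ H_0 fixes more than n^{4/9} points in the action of T on cosets of H_0. -/
section Aux

variable {G : Type*} [Group G]

def aux_fix_equiv (H : Subgroup G) (t s c : G) (hc : c * t * c⁻¹ = s) :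
    {y : G ⧸ H // s • y = y} ≃ {y : G ⧸ H // t • y = y} := by
  have hts : t * c⁻¹ = c⁻¹ * s := by rw [← hc]; group
  have hst : s * c = c * t := by rw [← hc]; group
  refine ⟨fun y => ⟨c⁻¹ • y.1, ?_⟩, fun y => ⟨c • y.1, ?_⟩, fun y => ?_, fun y => ?_⟩
  · rw [smul_smul, hts, ← smul_smul, y.2]
  · rw [smul_smul, hst, ← smul_smul, y.2]
  · ext; simp [smul_smul]
  · ext; simp [smul_smul]

lemma aux_key_s14 (H : Subgroup G) [Finite G] (t : G) (ht : t ∈ H) :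
    H.index ≤ Nat.card {x : G // IsConj t x} * Nat.card {y : G ⧸ H // t • y = y} := by
  set S := Σ s : {x : G // IsConj t x}, {y : G ⧸ H // s.1 • y = y} with hS
  have helper : ∀ (g : G) (x : G ⧸ H), (g : G ⧸ H) = x → (g * t * g⁻¹) • x = x := by
    intro g x h
    subst h
    show ((g * t * g⁻¹ * g : G) : G ⧸ H) = ((g : G) : G ⧸ H)
    rw [show g * t * g⁻¹ * g = g * t from by group, QuotientGroup.mk_mul_of_mem g ht]
  have hfix : ∀ x : G ⧸ H, (x.out * t * x.out⁻¹) • x = x :=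
    fun x => helper x.out x (Quotient.out_eq x)
  let F : G ⧸ H → S := fun x =>
    ⟨⟨x.out * t * x.out⁻¹, isConj_iff.mpr ⟨x.out, rfl⟩⟩, ⟨x, hfix x⟩⟩
  have hF : Function.Injective F :=
    Function.LeftInverse.injective (g := fun p : S => p.2.1) (fun x => rfl)
  have h1 : H.index ≤ Nat.card S := by
    have := Nat.card_le_card_of_injective F hF
    simpa [Subgroup.index] using this
  have e : S ≃ {x : G // IsConj t x} × {y : G ⧸ H // t • y = y} :=
    (Equiv.sigmaCongrRight (fun s : {x : G // IsConj t x} =>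
      aux_fix_equiv H t s.1 (isConj_iff.mp s.2).choose (isConj_iff.mp s.2).choose_spec)).trans
      (Equiv.sigmaEquivProd _ _)
  calc H.index ≤ Nat.card S := h1
    _ = _ := by rw [Nat.card_congr e, Nat.card_prod]

end Aux


/-- Let `T = A_m` with `m > 20`, `H₀ ≤ T` of even order, `n = |T : H₀|`. If
`|H₀| ≤ |T|^α`, every involution `t ∈ H₀` has `|t^T| ≤ |T|^β`, and `5 - 5α - 9β > 0`,
then some involution in `H₀` fixes more than `n^{4/9}` cosets of `H₀` in `T`. -/
theorem stmt_14 (m : ℕ) (hm : 20 < m)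
    (H0 : Subgroup (alternatingGroup (Fin m))) (hEven : Even (Nat.card H0))
    (α β : ℝ)
    (hα : (Nat.card H0 : ℝ) ≤ (Nat.card (alternatingGroup (Fin m)) : ℝ) ^ α)
    (hβ : ∀ t : alternatingGroup (Fin m), t ∈ H0 → orderOf t = 2 →
      (Nat.card {x : alternatingGroup (Fin m) // IsConj t x} : ℝ) ≤
        (Nat.card (alternatingGroup (Fin m)) : ℝ) ^ β)
    (hαβ : 5 - 5 * α - 9 * β > 0) :
    ∃ t : alternatingGroup (Fin m), t ∈ H0 ∧ orderOf t = 2 ∧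
      (Nat.card {x : alternatingGroup (Fin m) ⧸ H0 // t • x = x} : ℝ) >
        (H0.index : ℝ) ^ ((4 : ℝ) / 9) := by
  haveI : Fact (Nat.Prime 2) := ⟨Nat.prime_two⟩
  haveI : Fintype H0 := Fintype.ofFinite _
  have h2 : 2 ∣ Fintype.card H0 := by
    rw [← Nat.card_eq_fintype_card]; exact hEven.two_dvd
  obtain ⟨x, hx⟩ := exists_prime_orderOf_dvd_card 2 h2
  set t : ↥(alternatingGroup (Fin m)) := ↑x with htdef
  have ht : t ∈ H0 := x.2
  have hto : orderOf t = 2 := by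
    rw [← hx]; exact orderOf_injective H0.subtype H0.subtype_injective x
  refine ⟨t, ht, hto, ?_⟩
  -- notation
  set Nr : ℝ := (Nat.card (alternatingGroup (Fin m)) : ℝ) with hNrdef
  set n : ℕ := H0.index with hndef
  set cls : ℕ := Nat.card {y : alternatingGroup (Fin m) // IsConj t y} with hclsdef
  set fixt : ℕ := Nat.card {y : alternatingGroup (Fin m) ⧸ H0 // t • y = y} with hfixdef
  -- |T| > 1
  haveI : Nontrivial (Fin m) := Fin.nontrivial_iff_two_le.mpr (by omega)
  have hN1 : 1 < Nat.card (alternatingGroup (Fin m)) := by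
    have h2N : 2 * Fintype.card (alternatingGroup (Fin m)) = Fintype.card (Equiv.Perm (Fin m)) :=
      two_mul_card_alternatingGroup
    rw [Fintype.card_perm, Fintype.card_fin] at h2N
    have hm' : 21 ≤ Nat.factorial m := le_trans (by omega) (Nat.self_le_factorial m)
    rw [Nat.card_eq_fintype_card]
    omega
  have hNr1 : 1 < Nr := by rw [hNrdef]; exact_mod_cast hN1
  have hNrpos : (0:ℝ) < Nr := lt_trans one_pos hNr1
  have hn0 : n ≠ 0 := Subgroup.index_ne_zero_of_finite
  have hnpos : (0:ℝ) < (n:ℝ) := by positivity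
  have hH0pos : (0:ℝ) < (Nat.card H0 : ℝ) := by
    have := Nat.card_pos (α := H0); positivity
  have hprod : (Nat.card H0 : ℝ) * (n:ℝ) = Nr := by
    rw [hNrdef, hndef]; exact_mod_cast Subgroup.card_mul_index H0
  -- n ≥ N^{1-α}
  have hn : Nr ^ ((1:ℝ) - α) ≤ (n:ℝ) := by
    have hnd : (n:ℝ) = Nr / (Nat.card H0 : ℝ) := by
      rw [eq_div_iff (ne_of_gt hH0pos), mul_comm]
      exact hprod
    rw [hnd, Real.rpow_sub hNrpos, Real.rpow_one]
    gcongr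
  -- N^β < n^{5/9}
  have h59 : Nr ^ β < (n:ℝ) ^ ((5:ℝ)/9) := by
    calc Nr ^ β < Nr ^ (((1:ℝ) - α) * ((5:ℝ)/9)) := by
          rw [Real.rpow_lt_rpow_left_iff hNr1]; nlinarith
      _ = (Nr ^ ((1:ℝ) - α)) ^ ((5:ℝ)/9) := Real.rpow_mul hNrpos.le _ _
      _ ≤ (n:ℝ) ^ ((5:ℝ)/9) := Real.rpow_le_rpow (by positivity) hn (by norm_num)
  -- key counting inequality
  have hkey : (n:ℝ) ≤ (fixt:ℝ) * (cls:ℝ) := by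
    have := aux_key_s14 H0 t ht
    rw [mul_comm] at this
    exact_mod_cast this
  have hcls : (cls:ℝ) ≤ Nr ^ β := hβ t ht hto
  have hclspos : (0:ℝ) < (cls:ℝ) := by
    haveI : Nonempty {y : alternatingGroup (Fin m) // IsConj t y} := ⟨⟨t, IsConj.refl t⟩⟩
    have h0 : 0 < cls := Nat.card_pos
    exact_mod_cast h0
  have h4 : (0:ℝ) < (n:ℝ) ^ ((4:ℝ)/9) := by positivity
  have hmain : (n:ℝ) ^ ((4:ℝ)/9) * (cls:ℝ) < (fixt:ℝ) * (cls:ℝ) := by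
    calc (n:ℝ) ^ ((4:ℝ)/9) * (cls:ℝ) ≤ (n:ℝ) ^ ((4:ℝ)/9) * Nr ^ β := by gcongr
      _ < (n:ℝ) ^ ((4:ℝ)/9) * (n:ℝ) ^ ((5:ℝ)/9) := by
          exact mul_lt_mul_of_pos_left h59 h4
      _ = (n:ℝ) := by rw [← Real.rpow_add hnpos]; norm_num
      _ ≤ (fixt:ℝ) * (cls:ℝ) := hkey
  exact lt_of_mul_lt_mul_right hmain hclspos.le
end
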